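/- If Q + V·P ≤ 0, then there exists a feasible tuple x* ∈ F with fifth component B_e* = 0 such that f(x*) ≤ f(x) for every x ∈ F; that is, problem P3 admits an optimal solution with B_e = 0. -/
import Mathlib


/-- The feasible set of problem P3. -/
def P3Feasible (R E Cchar Cdis : ℝ) (Re Rb Ge Gb Be : ℝ) : Prop :=
  0 ≤ Gb + Rb ∧ Gb + Rb ≤ Cchar ∧ 0 ≤ Gb ∧ 0 ≤ Rb ∧
  0 ≤ Be ∧ Be ≤ Cdis ∧ 0 ≤ Re + Rb ∧ Re + Rb ≤ R ∧ 0 ≤ Re ∧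
  E = Re + Be + Ge ∧ 0 ≤ Ge ∧ (Gb + Rb) * Be = 0

/-- The objective function of problem P3. -/
noncomputable def P3Obj (P V Q : ℝ) (Re Rb Ge Gb Be : ℝ) : ℝ :=
  (Q + V * P) * Gb + Q * Rb - (Q + V * P) * Be - V * P * Re

/-- If `Q + V * P ≤ 0`, problem P3 admits an optimal solution
with `Be = 0`. -/
theorem p3_optimal_no_discharge
    (R E P V Q Cchar Cdis : ℝ)
    (hR : 0 ≤ R) (hE : 0 ≤ E) (hP : 0 ≤ P) (hV : 0 < V)
    (hCchar : 0 ≤ Cchar) (hCdis : 0 ≤ Cdis)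
    (hQVP : Q + V * P ≤ 0) :
    ∃ Re Rb Ge Gb Be : ℝ,
      P3Feasible R E Cchar Cdis Re Rb Ge Gb Be ∧ Be = 0 ∧
      ∀ Re' Rb' Ge' Gb' Be' : ℝ,
        P3Feasible R E Cchar Cdis Re' Rb' Ge' Gb' Be' →
        P3Obj P V Q Re Rb Ge Gb Be ≤ P3Obj P V Q Re' Rb' Ge' Gb' Be' := by
  have hVP : 0 ≤ V * P := mul_nonneg hV.le hP
  set m : ℝ := min Cchar R with hm
  set re : ℝ := min (R - m) E with hre
  have hmC : m ≤ Cchar := min_le_left _ _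
  have hmR : m ≤ R := min_le_right _ _
  have hm0 : 0 ≤ m := le_min hCchar hR
  have hre0 : 0 ≤ re := le_min (by linarith) hE
  have hreE : re ≤ E := min_le_right _ _
  have hreRm : re ≤ R - m := min_le_left _ _
  have hkey : re + m = min R (m + E) := by
    rw [hre, ← min_add_add_right, sub_add_cancel, add_comm E m]
  refine ⟨re, m, E - re, Cchar - m, 0, ?_, rfl, ?_⟩
  · refine ⟨by linarith, by linarith, by linarith, hm0, le_refl 0, hCdis,
      by linarith, by linarith, hre0, by ring, by linarith, by ring⟩
  · rintro Re' Rb' Ge' Gb' Be'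
      ⟨h1, h2, h3, h4, h5, h6, h7, h8, h9, h10, h11, h12⟩
    have hRb'm : Rb' ≤ m := le_min (by linarith) (by linarith)
    have hRe'E : Re' ≤ E := by linarith
    have hsum : Rb' + Re' ≤ min R (m + E) := le_min (by linarith) (by linarith)
    have ha : (Q + V * P) * Cchar ≤ (Q + V * P) * (Gb' + Rb') :=
      mul_le_mul_of_nonpos_left h2 hQVP
    have hb : V * P * (Rb' + Re') ≤ V * P * (min R (m + E)) :=
      mul_le_mul_of_nonneg_left hsum hVP
    have hc : (Q + V * P) * Be' ≤ 0 := mul_nonpos_of_nonpos_of_nonneg hQVP h5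
    simp only [P3Obj]
    nlinarith [hkey, ha, hb, hc]
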